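/- Let n ≥ 2 and let L ⊆ {1, …, n} with |L| ≤ 1. Consider the mammillary model's matrix: work in the polynomial ring R over ℝ in the 2(n−1)+|L| variables a_2, …, a_n (with a_i standing for the rate constant k_{i1} of the edge 1 → i), b_2, …, b_n (with b_i standing for k_{1i} of the edge i → 1), and y (the leak rate k_{0q}, present only if L = {q}). Let A be the n×n matrix over R with A_{1,1} = −(a_2 + a_3 + ⋯ + a_n) − (y if 1 ∈ L), A_{i,i} = −b_i − (y if i ∈ L) for 2 ≤ i ≤ n, A_{1,i} = b_i and A_{i,1} = a_i for 2 ≤ i ≤ n, and all other entries 0. Consider the 2n−1 polynomials consisting of the coefficients of X^m for m = 0, …, n−1 in det(X·I − A) ∈ R[X], together with the coefficients of X^m for m = 0, …, n−2 in the determinant of the submatrix of X·I − A obtained by deleting row 1 and column 1. Then the Jacobian matrix of this family with respect to all 2(n−1)+|L| variables, viewed over the fraction field of R, has rank 2(n−1)+|L|. -/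

import Mathlib

open Finset MvPolynomial

/-- The map `Fin (n-1) → Fin n` that skips the index `r` (used to delete row/column `r`). -/
def delIdx (n r : ℕ) (k : Fin (n - 1)) : Fin n :=
  if k.1 < r then ⟨k.1, by have := k.isLt; omega⟩ else ⟨k.1 + 1, by have := k.isLt; omega⟩

/-- The compartmental matrix of the `n`-compartment mammillary model with leak set `L`.
Variables: `Sum.inl (Sum.inl t)` is `a_{t+2}` (the rate `k_{t+2,1}` of the edge `1 → t+2`),
`Sum.inl (Sum.inr t)` is `b_{t+2}` (the rate `k_{1,t+2}` of the edge `t+2 → 1`), and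
`Sum.inr ⟨q, _⟩` is the leak rate `y` in compartment `q` (only for `q ∈ L`).
Entries (1-based): `A_{1,1} = -(a₂ + ⋯ + aₙ) - (y if 1 ∈ L)`,
`A_{i,i} = -bᵢ - (y if i ∈ L)` for `2 ≤ i ≤ n`, `A_{1,i} = bᵢ`, `A_{i,1} = aᵢ`,
all other entries `0`. -/
noncomputable def A8 (n : ℕ) (L : Finset (Fin n)) :
    Matrix (Fin n) (Fin n)
      (MvPolynomial ((Fin (n - 1) ⊕ Fin (n - 1)) ⊕ {i : Fin n // i ∈ L}) ℝ) :=
  Matrix.of fun i j =>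
    if i = j then
      (if h0 : i.1 = 0 then -(∑ t : Fin (n - 1), X (Sum.inl (Sum.inl t)))
       else -X (Sum.inl (Sum.inr ⟨i.1 - 1, by have := i.isLt; omega⟩)))
        - (if h : i ∈ L then X (Sum.inr ⟨i, h⟩) else 0)
    else if h : i.1 = 0 ∧ 1 ≤ j.1 then
      X (Sum.inl (Sum.inr ⟨j.1 - 1, by have := j.isLt; omega⟩))
    else if h : j.1 = 0 ∧ 1 ≤ i.1 then
      X (Sum.inl (Sum.inl ⟨i.1 - 1, by have := i.isLt; omega⟩))
    else 0

/-- The `2n - 1` non-monic coefficients of the input-output equation of the mammillary model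
with input and output in compartment `1`: the coefficients of `X^m`, `m = 0, …, n-1`, in
`det (X•I - A)`, together with the coefficients of `X^m`, `m = 0, …, n-2`, in the determinant
of the submatrix of `X•I - A` obtained by deleting row `1` and column `1`. -/
noncomputable def coeffs8 (n : ℕ) (L : Finset (Fin n)) (m : Fin (2 * n - 1)) :
    MvPolynomial ((Fin (n - 1) ⊕ Fin (n - 1)) ⊕ {i : Fin n // i ∈ L}) ℝ :=
  if m.1 < n then (Matrix.charmatrix (A8 n L)).det.coeff m.1
  else ((Matrix.charmatrix (A8 n L)).submatrix (delIdx n 0) (delIdx n 0)).det.coeff (m.1 - n)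

namespace S8

variable {n : ℕ} (L : Finset (Fin n))

abbrev Rp (n : ℕ) (L : Finset (Fin n)) :=
  MvPolynomial ((Fin (n - 1) ⊕ Fin (n - 1)) ⊕ {i : Fin n // i ∈ L}) ℝ

def ifn (t : Fin (n - 1)) : Fin n := ⟨t.1 + 1, by have := t.isLt; omega⟩

lemma ifn_inj : Function.Injective (ifn (n := n)) := by
  intro a b h
  have : a.1 + 1 = b.1 + 1 := congrArg Fin.val h
  exact Fin.ext (by omega)

lemma ifn_ne_zero (t : Fin (n - 1)) : (ifn t).1 ≠ 0 := by simp [ifn]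

noncomputable def av (t : Fin (n - 1)) : Rp n L := X (Sum.inl (Sum.inl t))
noncomputable def bv (t : Fin (n - 1)) : Rp n L := X (Sum.inl (Sum.inr t))
noncomputable def lk (i : Fin n) : Rp n L := if h : i ∈ L then X (Sum.inr ⟨i, h⟩) else 0
noncomputable def βv (t : Fin (n - 1)) : Rp n L := bv L t + lk L (ifn t)
noncomputable def δv (i : Fin n) : Rp n L :=
  (if h0 : i.1 = 0 then ∑ t, av L t
   else bv L ⟨i.1 - 1, by have := i.isLt; omega⟩) + lk L i

lemma δv_ifn (t : Fin (n - 1)) : δv L (ifn t) = βv L t := by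
  rw [δv, dif_neg (ifn_ne_zero t), βv]
  rfl

lemma image_ifn (hn : 0 < n) :
    (univ : Finset (Fin (n - 1))).image ifn = univ.erase ⟨0, hn⟩ := by
  ext j
  simp only [mem_image, mem_univ, true_and, mem_erase, and_true]
  constructor
  · rintro ⟨t, rfl⟩
    exact fun h => ifn_ne_zero t (congrArg Fin.val h)
  · intro hj
    have hj' : j.1 ≠ 0 := fun h => hj (Fin.ext h)
    exact ⟨⟨j.1 - 1, by have := j.isLt; omega⟩, Fin.ext (by simp [ifn]; omega)⟩

lemma prod_split {α : Type*} [CommMonoid α] (hn : 0 < n) (f : Fin n → α) :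
    ∏ i, f i = f ⟨0, hn⟩ * ∏ t : Fin (n - 1), f (ifn t) := by
  rw [← Finset.mul_prod_erase _ _ (mem_univ ⟨0, hn⟩), ← image_ifn hn,
    Finset.prod_image (fun a _ b _ h => ifn_inj h)]

lemma sum_split_erase {α : Type*} [AddCommMonoid α] (hn : 0 < n) (f : Fin n → α) :
    ∑ j ∈ univ.erase ⟨0, hn⟩, f j = ∑ t : Fin (n - 1), f (ifn t) := by
  rw [← image_ifn hn, Finset.sum_image (fun a _ b _ h => ifn_inj h)]

lemma prod_erase_split {α : Type*} [CommMonoid α] (hn : 0 < n) (t : Fin (n - 1))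
    (f : Fin n → α) :
    ∏ i ∈ (univ.erase ⟨0, hn⟩).erase (ifn t), f i = ∏ s ∈ univ.erase t, f (ifn s) := by
  rw [← image_ifn hn, ← Finset.image_erase ifn_inj,
    Finset.prod_image (fun a _ b _ h => ifn_inj h)]

end S8

namespace S8
variable {n : ℕ} (L : Finset (Fin n))

lemma A8_diag (i : Fin n) : A8 n L i i = -δv L i := by
  simp only [A8, Matrix.of_apply, if_pos rfl, δv, lk, av, bv]
  split_ifs <;> ring

lemma A8_off {i j : Fin n} (hij : i ≠ j) (hi : i.1 ≠ 0) (hj : j.1 ≠ 0) :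
    A8 n L i j = 0 := by
  simp only [A8, Matrix.of_apply, if_neg hij]
  rw [dif_neg (by tauto), dif_neg (by tauto)]

lemma A8_0j {i j : Fin n} (h0 : i.1 = 0) (hj : j.1 ≠ 0)
    (hj' : j.1 - 1 < n - 1) :
    A8 n L i j = bv L ⟨j.1 - 1, hj'⟩ := by
  have hij : i ≠ j := fun h => hj (h ▸ h0)
  simp only [A8, Matrix.of_apply, if_neg hij]
  rw [dif_pos ⟨h0, by omega⟩]
  rfl

lemma A8_i0 {i j : Fin n} (hi : i.1 ≠ 0) (h0 : j.1 = 0)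
    (hi' : i.1 - 1 < n - 1) :
    A8 n L i j = av L ⟨i.1 - 1, hi'⟩ := by
  have hij : i ≠ j := fun h => hi (h ▸ h0)
  simp only [A8, Matrix.of_apply, if_neg hij]
  rw [dif_neg (by tauto), dif_pos ⟨h0, by omega⟩]
  rfl

lemma cm_diag (i : Fin n) :
    Matrix.charmatrix (A8 n L) i i = Polynomial.X + Polynomial.C (δv L i) := by
  rw [Matrix.charmatrix_apply_eq, A8_diag, map_neg, sub_neg_eq_add]

lemma cm_off {i j : Fin n} (hij : i ≠ j) (hi : i.1 ≠ 0) (hj : j.1 ≠ 0) :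
    Matrix.charmatrix (A8 n L) i j = 0 := by
  rw [Matrix.charmatrix_apply_ne _ _ _ hij, A8_off L hij hi hj, map_zero, neg_zero]

lemma cm_0j {i j : Fin n} (h0 : i.1 = 0) (hj : j.1 ≠ 0) (hj' : j.1 - 1 < n - 1) :
    Matrix.charmatrix (A8 n L) i j = -Polynomial.C (bv L ⟨j.1 - 1, hj'⟩) := by
  have hij : i ≠ j := fun h => hj (h ▸ h0)
  rw [Matrix.charmatrix_apply_ne _ _ _ hij, A8_0j L h0 hj hj']

lemma cm_i0 {i j : Fin n} (hi : i.1 ≠ 0) (h0 : j.1 = 0) (hi' : i.1 - 1 < n - 1) :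
    Matrix.charmatrix (A8 n L) i j = -Polynomial.C (av L ⟨i.1 - 1, hi'⟩) := by
  have hij : i ≠ j := fun h => hi (h ▸ h0)
  rw [Matrix.charmatrix_apply_ne _ _ _ hij, A8_i0 L hi h0 hi']

noncomputable def PP : Polynomial (Rp n L) :=
  ∏ t, (Polynomial.X + Polynomial.C (βv L t))

noncomputable def Pe (t : Fin (n - 1)) : Polynomial (Rp n L) :=
  ∏ s ∈ univ.erase t, (Polynomial.X + Polynomial.C (βv L s))

noncomputable def D1 (hn : 0 < n) : Polynomial (Rp n L) :=
  (Polynomial.X + Polynomial.C (δv L ⟨0, hn⟩)) * PP L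
    - ∑ t, Polynomial.C (av L t * bv L t) * Pe L t

lemma det_sub (hn : 0 < n) :
    ((Matrix.charmatrix (A8 n L)).submatrix (delIdx n 0) (delIdx n 0)).det = PP L := by
  have hdel : delIdx n 0 = ifn := by
    funext k
    simp [delIdx, ifn]
  have hd : (Matrix.charmatrix (A8 n L)).submatrix (delIdx n 0) (delIdx n 0)
      = Matrix.diagonal (fun k => Polynomial.X + Polynomial.C (βv L k)) := by
    refine Matrix.ext fun k k' => ?_
    by_cases h : k = k'
    · subst h
      rw [Matrix.submatrix_apply, hdel, Matrix.diagonal_apply_eq, cm_diag, δv_ifn]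
    · rw [Matrix.submatrix_apply, hdel, Matrix.diagonal_apply_ne _ h,
        cm_off L (fun hh => h (ifn_inj hh)) (ifn_ne_zero k) (ifn_ne_zero k')]
  rw [hd, Matrix.det_diagonal, PP]

lemma det_A8 (hn : 2 ≤ n) :
    (Matrix.charmatrix (A8 n L)).det = D1 L (by omega) := by
  classical
  have hn0 : 0 < n := by omega
  set z : Fin n := ⟨0, hn0⟩ with hz
  set s : Finset (Equiv.Perm (Fin n)) :=
    insert 1 ((univ.erase z).image (fun j => Equiv.swap z j)) with hs
  rw [Matrix.det_apply]
  rw [← Finset.sum_subset (Finset.subset_univ s) ?van]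
  case van =>
    intro σ _ hσ
    suffices h : ∃ i, Matrix.charmatrix (A8 n L) (σ i) i = 0 by
      obtain ⟨i, hi⟩ := h
      rw [Finset.prod_eq_zero (f := fun k => Matrix.charmatrix (A8 n L) (σ k) k)
        (mem_univ i) hi, smul_zero]
    by_contra hcon
    push_neg at hcon
    apply hσ
    have fact : ∀ i, σ i = i ∨ σ i = z ∨ i = z := by
      intro i
      by_contra h
      push_neg at h
      obtain ⟨h1, h2, h3⟩ := h
      exact hcon i (cm_off L h1 (fun hh => h2 (Fin.ext hh)) (fun hh => h3 (Fin.ext hh)))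
    by_cases h0 : σ z = z
    · have : σ = 1 := by
        apply Equiv.ext
        intro i
        rcases fact i with h | h | h
        · simpa using h
        · have := σ.injective (h.trans h0.symm)
          simp [this, h0]
        · simp [h, h0]
      rw [hs, this]
      exact mem_insert_self _ _
    · set j := σ z with hj
      have hjz : j ≠ z := h0
      have hσj : σ j = z := by
        rcases fact j with h | h | h
        · exact absurd (σ.injective (hj.symm ▸ h : σ j = σ z)) hjz
        · exact h
        · exact absurd h hjz
      have hσeq : σ = Equiv.swap z j := by
        apply Equiv.ext
        intro i
        by_cases hiz : i = z
        · rw [hiz, Equiv.swap_apply_left]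
        · by_cases hij : i = j
          · rw [hij, Equiv.swap_apply_right]; exact hσj
          · rw [Equiv.swap_apply_of_ne_of_ne hiz hij]
            rcases fact i with h | h | h
            · exact h
            · exact absurd (σ.injective (h.trans hσj.symm)) hij
            · exact absurd h hiz
      rw [hs]
      apply mem_insert_of_mem
      exact mem_image.2 ⟨j, mem_erase.2 ⟨hjz, mem_univ _⟩, hσeq.symm⟩
  · -- compute the sum over s
    have h1notin : (1 : Equiv.Perm (Fin n)) ∉ (univ.erase z).image (fun j => Equiv.swap z j) := by
      intro h
      obtain ⟨j, hjmem, hjeq⟩ := mem_image.1 h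
      have hjz : j ≠ z := (mem_erase.1 hjmem).1
      have := congrArg (fun e => e z) hjeq
      simp [Equiv.swap_apply_left] at this
      exact hjz this
    rw [hs, Finset.sum_insert h1notin,
      Finset.sum_image (fun a ha b hb h => by
        have := congrArg (fun e => e z) h
        simpa [Equiv.swap_apply_left] using this)]
    have hterm1 : (Equiv.Perm.sign (1 : Equiv.Perm (Fin n))) • ∏ i, Matrix.charmatrix (A8 n L) ((1 : Equiv.Perm (Fin n)) i) i
        = (Polynomial.X + Polynomial.C (δv L z)) * PP L := by
      simp only [Equiv.Perm.sign_one, one_smul, Equiv.Perm.one_apply]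
      rw [prod_split hn0 (fun i => Matrix.charmatrix (A8 n L) i i)]
      congr 1
      · exact cm_diag L z
      · rw [PP]
        exact Finset.prod_congr rfl (fun t _ => by rw [cm_diag, δv_ifn])
    have htermsw : ∀ j ∈ univ.erase z,
        (Equiv.Perm.sign (Equiv.swap z j)) • ∏ i, Matrix.charmatrix (A8 n L) (Equiv.swap z j i) i
        = -(Polynomial.C (av L ⟨j.1 - 1, by have := j.isLt; omega⟩
              * bv L ⟨j.1 - 1, by have := j.isLt; omega⟩)
            * ∏ i ∈ (univ.erase z).erase j, (Polynomial.X + Polynomial.C (δv L i))) := by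
      intro j hjmem
      have hjz : j ≠ z := (mem_erase.1 hjmem).1
      have hjv : j.1 ≠ 0 := fun h => hjz (Fin.ext h)
      rw [Equiv.Perm.sign_swap (Ne.symm hjz)]
      rw [← Finset.mul_prod_erase _ _ (mem_univ z), ← Finset.mul_prod_erase _ _ hjmem]
      rw [Equiv.swap_apply_left, Equiv.swap_apply_right]
      have hprod : ∏ i ∈ (univ.erase z).erase j, Matrix.charmatrix (A8 n L) (Equiv.swap z j i) i
          = ∏ i ∈ (univ.erase z).erase j, (Polynomial.X + Polynomial.C (δv L i)) := by
        refine Finset.prod_congr rfl (fun i hi => ?_)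
        have hiz : i ≠ z := (mem_erase.1 (mem_erase.1 hi).2).1
        have hij : i ≠ j := (mem_erase.1 hi).1
        rw [Equiv.swap_apply_of_ne_of_ne hiz hij, cm_diag]
      rw [hprod, cm_i0 L hjv (show z.1 = 0 from rfl) (by have := j.isLt; omega),
        cm_0j L (show z.1 = 0 from rfl) hjv (by have := j.isLt; omega)]
      simp only [Units.smul_def, Units.val_neg, Units.val_one, neg_smul, one_smul]
      rw [map_mul]
      ring
    rw [hterm1, Finset.sum_congr rfl htermsw, sum_split_erase hn0]
    have hfin : ∀ t : Fin (n - 1),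
        -(Polynomial.C (av L ⟨(ifn t).1 - 1, by have := (ifn t).isLt; omega⟩
              * bv L ⟨(ifn t).1 - 1, by have := (ifn t).isLt; omega⟩)
            * ∏ i ∈ (univ.erase z).erase (ifn t), (Polynomial.X + Polynomial.C (δv L i)))
        = -(Polynomial.C (av L t * bv L t) * Pe L t) := by
      intro t
      have hval : (⟨(ifn t).1 - 1, by have := (ifn t).isLt; omega⟩ : Fin (n - 1)) = t := by
        apply Fin.ext
        simp [ifn]
      rw [hval, prod_erase_split hn0]
      congr 1
    rw [Finset.sum_congr rfl (fun t _ => hfin t)]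
    rw [D1, Finset.sum_neg_distrib, sub_eq_add_neg]

end S8

namespace S8
variable {n : ℕ} (L : Finset (Fin n))

noncomputable def pdP (v : (Fin (n - 1) ⊕ Fin (n - 1)) ⊕ {i : Fin n // i ∈ L})
    (P : Polynomial (Rp n L)) : Polynomial (Rp n L) :=
  ⟨AddMonoidAlgebra.ofCoeff (P.toFinsupp.coeff.mapRange (pderiv v) (map_zero _))⟩

variable {v : (Fin (n - 1) ⊕ Fin (n - 1)) ⊕ {i : Fin n // i ∈ L}}

lemma coeff_pdP (P : Polynomial (Rp n L)) (k : ℕ) :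
    (pdP L v P).coeff k = pderiv v (P.coeff k) := rfl

lemma pdP_add (P Q : Polynomial (Rp n L)) :
    pdP L v (P + Q) = pdP L v P + pdP L v Q := by
  apply Polynomial.ext
  intro k
  simp [coeff_pdP]

lemma pdP_sub (P Q : Polynomial (Rp n L)) :
    pdP L v (P - Q) = pdP L v P - pdP L v Q := by
  apply Polynomial.ext
  intro k
  simp [coeff_pdP]

lemma pdP_C (r : Rp n L) : pdP L v (Polynomial.C r) = Polynomial.C (pderiv v r) := by
  apply Polynomial.ext
  intro k
  simp only [coeff_pdP, Polynomial.coeff_C]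
  split <;> simp

lemma pdP_X : pdP L v Polynomial.X = 0 := by
  apply Polynomial.ext
  intro k
  simp only [coeff_pdP, Polynomial.coeff_X]
  split <;> simp

lemma pdP_one : pdP L v 1 = 0 := by
  apply Polynomial.ext
  intro k
  simp only [coeff_pdP, Polynomial.coeff_one]
  split <;> simp

lemma pdP_mul (P Q : Polynomial (Rp n L)) :
    pdP L v (P * Q) = pdP L v P * Q + P * pdP L v Q := by
  apply Polynomial.ext
  intro k
  simp only [coeff_pdP, Polynomial.coeff_add, Polynomial.coeff_mul, map_sum, pderiv_mul,
    Finset.sum_add_distrib]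

lemma pdP_sum {α : Type*} (s : Finset α) (f : α → Polynomial (Rp n L)) :
    pdP L v (∑ i ∈ s, f i) = ∑ i ∈ s, pdP L v (f i) := by
  apply Polynomial.ext
  intro k
  simp [coeff_pdP, Polynomial.finset_sum_coeff]

lemma pdP_prod {α : Type*} [DecidableEq α] (s : Finset α) (f : α → Polynomial (Rp n L)) :
    pdP L v (∏ i ∈ s, f i) = ∑ i ∈ s, pdP L v (f i) * ∏ j ∈ s.erase i, f j := by
  classical
  induction s using Finset.induction_on with
  | empty => simp [pdP_one]
  | insert a s ha ih =>
    rw [Finset.prod_insert ha, pdP_mul, ih, Finset.sum_insert ha, Finset.erase_insert ha]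
    rw [Finset.mul_sum]
    rw [add_right_inj]
    refine Finset.sum_congr rfl fun i hi => ?_
    have hia : i ≠ a := fun h => ha (h ▸ hi)
    rw [Finset.erase_insert_of_ne hia.symm, Finset.prod_insert (fun h => ha (Finset.mem_of_mem_erase h))]
    ring

lemma pdP_lin (r : Rp n L) :
    pdP L v (Polynomial.X + Polynomial.C r) = Polynomial.C (pderiv v r) := by
  rw [pdP_add, pdP_X, pdP_C, zero_add]

noncomputable def wv (v : (Fin (n - 1) ⊕ Fin (n - 1)) ⊕ {i : Fin n // i ∈ L})
    (s : Fin (n - 1)) : Rp n L := pderiv v (βv L s)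

lemma pdP_PP : pdP L v (PP L) = ∑ s, Polynomial.C (wv L v s) * Pe L s := by
  rw [PP, pdP_prod]
  exact Finset.sum_congr rfl fun s _ => by rw [pdP_lin]; rfl

lemma pdP_Pe (t : Fin (n - 1)) :
    pdP L v (Pe L t) = ∑ s ∈ univ.erase t, Polynomial.C (wv L v s)
      * ∏ j ∈ (univ.erase t).erase s, (Polynomial.X + Polynomial.C (βv L j)) := by
  rw [Pe, pdP_prod]
  exact Finset.sum_congr rfl fun s _ => by rw [pdP_lin]; rfl

lemma pdP_D1 (hn : 0 < n) :
    pdP L v (D1 L hn) = Polynomial.C (pderiv v (δv L ⟨0, hn⟩)) * PP L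
      + (Polynomial.X + Polynomial.C (δv L ⟨0, hn⟩)) * pdP L v (PP L)
      - ∑ t, (Polynomial.C (pderiv v (av L t * bv L t)) * Pe L t
          + Polynomial.C (av L t * bv L t) * pdP L v (Pe L t)) := by
  rw [D1, pdP_sub, pdP_mul, pdP_lin, pdP_sum]
  congr 1
  exact Finset.sum_congr rfl fun t _ => by rw [pdP_mul, pdP_C]

end S8

namespace S8
variable {n : ℕ} (L : Finset (Fin n))
variable {v : (Fin (n - 1) ⊕ Fin (n - 1)) ⊕ {i : Fin n // i ∈ L}}

lemma pd_av (t : Fin (n - 1)) :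
    pderiv v (av L t) = if Sum.inl (Sum.inl t) = v then 1 else 0 := by
  rw [av, pderiv_X, Pi.single_apply]

lemma pd_bv (t : Fin (n - 1)) :
    pderiv v (bv L t) = if Sum.inl (Sum.inr t) = v then 1 else 0 := by
  rw [bv, pderiv_X, Pi.single_apply]

lemma pd_lk_inl (w : Fin (n - 1) ⊕ Fin (n - 1)) (i : Fin n) :
    pderiv (Sum.inl w) (lk L i) = 0 := by
  rw [lk]
  split
  · rw [pderiv_X, Pi.single_apply, if_neg (by simp)]
  · exact map_zero _

lemma pd_lk_inr (j : {i : Fin n // i ∈ L}) (i : Fin n) :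
    pderiv (Sum.inr j) (lk L i) = if j.1 = i then 1 else 0 := by
  rw [lk]
  split
  · rename_i h
    rw [pderiv_X, Pi.single_apply]
    congr 1
    simp [Subtype.ext_iff, eq_comm]
  · rename_i h
    have hne : ¬ j.1 = i := fun heq => h (by rw [← heq]; exact j.2)
    rw [map_zero, if_neg hne]

lemma wv_aa (t s : Fin (n - 1)) : wv L (Sum.inl (Sum.inl t)) s = 0 := by
  rw [wv, βv, map_add, pd_bv, pd_lk_inl, if_neg (by simp), add_zero]

lemma wv_ab (t s : Fin (n - 1)) :
    wv L (Sum.inl (Sum.inr t)) s = if s = t then 1 else 0 := by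
  rw [wv, βv, map_add, pd_bv, pd_lk_inl, add_zero]
  congr 1
  simp [eq_comm]

lemma wv_y (j : {i : Fin n // i ∈ L}) (s : Fin (n - 1)) :
    wv L (Sum.inr j) s = if j.1 = ifn s then 1 else 0 := by
  rw [wv, βv, map_add, pd_bv, pd_lk_inr, if_neg (by simp), zero_add]

lemma pd_δ0_aa (hn : 0 < n) (t : Fin (n - 1)) :
    pderiv (Sum.inl (Sum.inl t) : (Fin (n - 1) ⊕ Fin (n - 1)) ⊕ {i : Fin n // i ∈ L})
      (δv L ⟨0, hn⟩) = 1 := by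
  rw [δv, dif_pos rfl, map_add, pd_lk_inl, add_zero, map_sum]
  rw [Finset.sum_congr rfl (fun s _ => pd_av L s)]
  simp

lemma pd_δ0_ab (hn : 0 < n) (t : Fin (n - 1)) :
    pderiv (Sum.inl (Sum.inr t) : (Fin (n - 1) ⊕ Fin (n - 1)) ⊕ {i : Fin n // i ∈ L})
      (δv L ⟨0, hn⟩) = 0 := by
  rw [δv, dif_pos rfl, map_add, pd_lk_inl, add_zero, map_sum]
  rw [Finset.sum_congr rfl (fun s _ => pd_av L s)]
  simp

lemma pd_δ0_y (hn : 0 < n) (j : {i : Fin n // i ∈ L}) :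
    pderiv (Sum.inr j : (Fin (n - 1) ⊕ Fin (n - 1)) ⊕ {i : Fin n // i ∈ L})
      (δv L ⟨0, hn⟩) = if j.1 = ⟨0, hn⟩ then 1 else 0 := by
  rw [δv, dif_pos rfl, map_add, pd_lk_inr, map_sum]
  rw [Finset.sum_congr rfl (fun s _ => pd_av L s)]
  simp

lemma pd_ab (t : Fin (n - 1)) :
    pderiv v (av L t * bv L t)
      = (if Sum.inl (Sum.inl t) = v then bv L t else 0)
        + (if Sum.inl (Sum.inr t) = v then av L t else 0) := by
  rw [pderiv_mul, pd_av, pd_bv]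
  split_ifs <;> ring

lemma monic_PP : (PP L).Monic :=
  Polynomial.monic_prod_of_monic _ _ fun t _ => Polynomial.monic_X_add_C _

lemma natdeg_PP : (PP L).natDegree = n - 1 := by
  rw [PP, Polynomial.natDegree_prod_of_monic _ _ (fun t _ => Polynomial.monic_X_add_C _)]
  simp

lemma pd_coeff_PP_high (k : ℕ) (hk : n - 1 ≤ k) : pderiv v ((PP L).coeff k) = 0 := by
  rcases eq_or_lt_of_le hk with h | h
  · cases h
    have h1 : (PP L).coeff (n - 1) = 1 := by
      have := (monic_PP L).coeff_natDegree
      rwa [natdeg_PP L] at this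
    rw [h1]
    exact pderiv_one
  · rw [Polynomial.coeff_eq_zero_of_natDegree_lt (by rw [natdeg_PP]; exact h), map_zero]

lemma natdeg_Pe_le (t : Fin (n - 1)) : (Pe L t).natDegree ≤ n - 2 := by
  rw [Pe]
  refine le_trans (Polynomial.natDegree_prod_le _ _) ?_
  refine le_trans (Finset.sum_le_sum (fun s _ => (Polynomial.natDegree_X_add_C _).le)) ?_
  rw [Finset.sum_const, smul_eq_mul, mul_one, Finset.card_erase_of_mem (mem_univ t)]
  simp only [Finset.card_univ, Fintype.card_fin]
  omega

lemma pd_coeff_D1_high (hn : 0 < n) (k : ℕ) (hk : n ≤ k) :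
    pderiv v ((D1 L hn).coeff k) = 0 := by
  have hmon : ((Polynomial.X + Polynomial.C (δv L ⟨0, hn⟩)) * PP L).Monic :=
    (Polynomial.monic_X_add_C _).mul (monic_PP L)
  have h1 : ((Polynomial.X + Polynomial.C (δv L ⟨0, hn⟩)) * PP L).natDegree = n := by
    rw [(Polynomial.monic_X_add_C _).natDegree_mul (monic_PP L), natdeg_PP,
      Polynomial.natDegree_X_add_C]
    omega
  have hS : (∑ t, Polynomial.C (av L t * bv L t) * Pe L t).coeff k = 0 := by
    rw [Polynomial.finset_sum_coeff]
    refine Finset.sum_eq_zero fun t _ => ?_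
    refine Polynomial.coeff_eq_zero_of_natDegree_lt
      (lt_of_le_of_lt (Polynomial.natDegree_mul_le) ?_)
    have := natdeg_Pe_le L t
    simp only [Polynomial.natDegree_C, zero_add]
    omega
  rw [D1, Polynomial.coeff_sub, hS, sub_zero]
  rcases eq_or_lt_of_le hk with h | h
  · cases h
    have h2 : ((Polynomial.X + Polynomial.C (δv L ⟨0, hn⟩)) * PP L).coeff n = 1 := by
      have := hmon.coeff_natDegree
      rwa [h1] at this
    rw [h2]
    exact pderiv_one
  · rw [Polynomial.coeff_eq_zero_of_natDegree_lt (by rw [h1]; exact h), map_zero]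

end S8

namespace S8
variable {n : ℕ} (L : Finset (Fin n))
variable {v : (Fin (n - 1) ⊕ Fin (n - 1)) ⊕ {i : Fin n // i ∈ L}}

lemma Pe_def (t : Fin (n - 1)) :
    Pe L t = ∏ s ∈ univ.erase t, (Polynomial.X + Polynomial.C (βv L s)) := rfl

lemma PP_def : PP L = ∏ t, (Polynomial.X + Polynomial.C (βv L t)) := rfl

lemma βv_ne {s t : Fin (n - 1)} (h : s ≠ t) : βv L s ≠ βv L t := by
  classical
  intro heq
  have hev := congrArg
    (eval (fun w : (Fin (n - 1) ⊕ Fin (n - 1)) ⊕ {i : Fin n // i ∈ L} =>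
      if w = Sum.inl (Sum.inr s) then (1 : ℝ) else 0)) heq
  simp only [βv, bv, lk] at hev
  split_ifs at hev <;> simp_all <;>
    · rw [if_neg (fun hh => h hh.symm)] at hev
      exact one_ne_zero hev

lemma bv_ne_zero (t : Fin (n - 1)) : bv L t ≠ 0 := MvPolynomial.X_ne_zero _

lemma av_ne_zero (t : Fin (n - 1)) : av L t ≠ 0 := MvPolynomial.X_ne_zero _

lemma one_add_βv_ne_zero (t : Fin (n - 1)) : (1 : Rp n L) + βv L t ≠ 0 := by
  classical
  intro heq
  have hev := congrArg (eval (fun _ => (0 : ℝ))) heq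
  simp only [βv, bv, lk] at hev
  split_ifs at hev <;> simp_all

lemma natdeg_pdP_le (P : Polynomial (Rp n L)) :
    (pdP L v P).natDegree ≤ P.natDegree :=
  Polynomial.natDegree_le_iff_coeff_eq_zero.mpr fun N hN => by
    rw [coeff_pdP, Polynomial.coeff_eq_zero_of_natDegree_lt hN, map_zero]

lemma natdeg_D1_le (hn : 0 < n) : (D1 L hn).natDegree ≤ n := by
  rw [D1]
  refine le_trans (Polynomial.natDegree_sub_le _ _) (max_le ?_ ?_)
  · refine le_trans (Polynomial.natDegree_mul_le) ?_
    have h1 : (Polynomial.X + Polynomial.C (δv L ⟨0, hn⟩)).natDegree ≤ 1 :=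
      (Polynomial.natDegree_X_add_C _).le
    have h2 := natdeg_PP L
    omega
  · have hall : ∀ t ∈ (univ : Finset (Fin (n - 1))),
        (Polynomial.C (av L t * bv L t) * Pe L t).natDegree ≤ n - 2 := by
      intro t _
      refine le_trans (Polynomial.natDegree_mul_le) ?_
      have := natdeg_Pe_le L t
      simp only [Polynomial.natDegree_C, zero_add]
      omega
    exact le_trans (Polynomial.natDegree_sum_le_of_forall_le _ _ hall) (by omega)

section Eval

variable {K : Type*} [CommRing K] (φ : Rp n L →+* K)

lemma ev_prod (x : K) (s : Finset (Fin (n - 1))) :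
    Polynomial.eval₂ φ x (∏ j ∈ s, (Polynomial.X + Polynomial.C (βv L j)))
      = ∏ j ∈ s, (x + φ (βv L j)) := by
  rw [Polynomial.eval₂_finset_prod]
  exact Finset.prod_congr rfl fun j _ => by
    rw [Polynomial.eval₂_add, Polynomial.eval₂_X, Polynomial.eval₂_C]

lemma ev_pdP_PP (x : K) :
    Polynomial.eval₂ φ x (pdP L v (PP L))
      = ∑ s, φ (wv L v s) * ∏ j ∈ univ.erase s, (x + φ (βv L j)) := by
  rw [pdP_PP, Polynomial.eval₂_finset_sum]
  exact Finset.sum_congr rfl fun s _ => by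
    rw [Polynomial.eval₂_mul, Polynomial.eval₂_C, Pe_def, ev_prod]

lemma ev_pdP_Pe (x : K) (t : Fin (n - 1)) :
    Polynomial.eval₂ φ x (pdP L v (Pe L t))
      = ∑ s ∈ univ.erase t, φ (wv L v s)
          * ∏ j ∈ (univ.erase t).erase s, (x + φ (βv L j)) := by
  rw [pdP_Pe, Polynomial.eval₂_finset_sum]
  exact Finset.sum_congr rfl fun s _ => by
    rw [Polynomial.eval₂_mul, Polynomial.eval₂_C, ev_prod]

lemma ev_pdP_D1 (hn : 0 < n) (x : K) :
    Polynomial.eval₂ φ x (pdP L v (D1 L hn))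
      = φ (pderiv v (δv L ⟨0, hn⟩)) * ∏ j, (x + φ (βv L j))
        + (x + φ (δv L ⟨0, hn⟩))
            * ∑ s, φ (wv L v s) * ∏ j ∈ univ.erase s, (x + φ (βv L j))
        - ∑ t, (φ (pderiv v (av L t * bv L t))
              * ∏ j ∈ univ.erase t, (x + φ (βv L j))
            + φ (av L t * bv L t)
              * ∑ s ∈ univ.erase t, φ (wv L v s)
                  * ∏ j ∈ (univ.erase t).erase s, (x + φ (βv L j))) := by
  have hPP : Polynomial.eval₂ φ x (PP L) = ∏ j, (x + φ (βv L j)) := by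
    rw [PP_def, ev_prod]
  have hPe : ∀ t, Polynomial.eval₂ φ x (Pe L t) = ∏ j ∈ univ.erase t, (x + φ (βv L j)) :=
    fun t => by rw [Pe_def, ev_prod]
  rw [pdP_D1, Polynomial.eval₂_sub, Polynomial.eval₂_add, Polynomial.eval₂_mul,
    Polynomial.eval₂_C, Polynomial.eval₂_mul, Polynomial.eval₂_add, Polynomial.eval₂_X,
    Polynomial.eval₂_C, Polynomial.eval₂_finset_sum, ev_pdP_PP, hPP]
  congr 1
  refine Finset.sum_congr rfl fun t _ => ?_
  rw [Polynomial.eval₂_add, Polynomial.eval₂_mul, Polynomial.eval₂_C,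
    Polynomial.eval₂_mul, Polynomial.eval₂_C, ev_pdP_Pe, hPe]

end Eval

end S8

namespace S8
variable {n : ℕ} (L : Finset (Fin n))

section Unfold

variable {K : Type*} [CommRing K] (φ : Rp n L →+* K)
  (c : ((Fin (n - 1) ⊕ Fin (n - 1)) ⊕ {i : Fin n // i ∈ L}) → K)

lemma unfold_γ (s : Fin (n - 1)) :
    ∑ v, c v * φ (wv L v s)
      = c (Sum.inl (Sum.inr s))
        + ∑ j : {i : Fin n // i ∈ L}, (if j.1 = ifn s then c (Sum.inr j) else 0) := by
  classical
  rw [Fintype.sum_sum_type, Fintype.sum_sum_type]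
  rw [Finset.sum_eq_zero (fun t _ => by rw [wv_aa, map_zero, mul_zero]), zero_add]
  congr 1
  · rw [Finset.sum_congr rfl (fun t (_ : t ∈ univ) => by
      rw [wv_ab, apply_ite φ, map_one, map_zero, mul_ite, mul_one, mul_zero])]
    rw [Finset.sum_ite_eq, if_pos (mem_univ s)]
  · exact Finset.sum_congr rfl fun j _ => by
      rw [wv_y, apply_ite φ, map_one, map_zero, mul_ite, mul_one, mul_zero]

lemma unfold_u (t : Fin (n - 1)) :
    ∑ v, c v * φ (pderiv v (av L t * bv L t))
      = c (Sum.inl (Sum.inl t)) * φ (bv L t)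
        + c (Sum.inl (Sum.inr t)) * φ (av L t) := by
  classical
  rw [Fintype.sum_sum_type, Fintype.sum_sum_type]
  have h1 : ∑ s : Fin (n - 1), c (Sum.inl (Sum.inl s))
      * φ (pderiv (Sum.inl (Sum.inl s)) (av L t * bv L t))
      = c (Sum.inl (Sum.inl t)) * φ (bv L t) := by
    simp [pd_av, pd_bv, apply_ite φ, mul_add, mul_ite]
  have h2 : ∑ s : Fin (n - 1), c (Sum.inl (Sum.inr s))
      * φ (pderiv (Sum.inl (Sum.inr s)) (av L t * bv L t))
      = c (Sum.inl (Sum.inr t)) * φ (av L t) := by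
    simp [pd_av, pd_bv, apply_ite φ, mul_add, mul_ite]
  have h3 : ∑ j : {i : Fin n // i ∈ L}, c (Sum.inr j)
      * φ (pderiv (Sum.inr j) (av L t * bv L t)) = 0 := by
    simp [pd_av, pd_bv, apply_ite φ, mul_add, mul_ite]
  rw [h1, h2, h3, add_zero]

lemma unfold_Γ (hn : 0 < n) :
    ∑ v, c v * φ (pderiv v (δv L ⟨0, hn⟩))
      = ∑ t, c (Sum.inl (Sum.inl t))
        + ∑ j : {i : Fin n // i ∈ L},
            (if j.1 = (⟨0, hn⟩ : Fin n) then c (Sum.inr j) else 0) := by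
  classical
  rw [Fintype.sum_sum_type, Fintype.sum_sum_type]
  have h1 : ∑ t : Fin (n - 1), c (Sum.inl (Sum.inl t))
      * φ (pderiv (Sum.inl (Sum.inl t)) (δv L ⟨0, hn⟩))
      = ∑ t, c (Sum.inl (Sum.inl t)) :=
    Finset.sum_congr rfl fun t _ => by rw [pd_δ0_aa, map_one, mul_one]
  have h2 : ∑ t : Fin (n - 1), c (Sum.inl (Sum.inr t))
      * φ (pderiv (Sum.inl (Sum.inr t)) (δv L ⟨0, hn⟩)) = 0 :=
    Finset.sum_eq_zero fun t _ => by rw [pd_δ0_ab, map_zero, mul_zero]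
  have h3 : ∑ j : {i : Fin n // i ∈ L}, c (Sum.inr j)
      * φ (pderiv (Sum.inr j) (δv L ⟨0, hn⟩))
      = ∑ j : {i : Fin n // i ∈ L},
          (if j.1 = (⟨0, hn⟩ : Fin n) then c (Sum.inr j) else 0) :=
    Finset.sum_congr rfl fun j _ => by
      rw [pd_δ0_y, apply_ite φ, map_one, map_zero, mul_ite, mul_one, mul_zero]
  rw [h1, h2, h3, add_zero]

end Unfold

end S8

namespace S8

lemma swap_gsum {K : Type*} [CommRing K] {V ι : Type*} [Fintype V] (c : V → K) (h : ι → K)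
    (w : V → ι → K) (s : Finset ι) :
    ∑ v, c v * ∑ i ∈ s, w v i * h i = ∑ i ∈ s, (∑ v, c v * w v i) * h i := by
  simp_rw [Finset.mul_sum]
  rw [Finset.sum_comm]
  refine Finset.sum_congr rfl fun i _ => ?_
  rw [Finset.sum_mul]
  exact Finset.sum_congr rfl fun v _ => by ring

lemma gvanish {n : ℕ} (hn : 2 ≤ n) (L : Finset (Fin n)) (hL : L.card ≤ 1)
    {K : Type} [Field K] (φ : Rp n L →+* K) (φinj : Function.Injective φ)
    (g : ((Fin (n - 1) ⊕ Fin (n - 1)) ⊕ {i : Fin n // i ∈ L}) → K)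
    (hrow : ∀ mm : Fin (2 * n - 1),
      ∑ v, g v * φ (pderiv v (coeffs8 n L mm)) = 0) :
    ∀ v, g v = 0 := by
  classical
  have hn0 : 0 < n := by omega
  have φne : ∀ r : S8.Rp n L, r ≠ 0 → φ r ≠ 0 :=
    fun r hr h0 => hr (φinj (by rw [h0, map_zero]))
  have hss : Subsingleton {i : Fin n // i ∈ L} :=
    ⟨fun a b => Subtype.ext (Finset.card_le_one.1 hL a.1 a.2 b.1 b.2)⟩
  have rowD1 : ∀ k : ℕ, ∑ v, g v * φ (pderiv v ((S8.D1 L hn0).coeff k)) = 0 := by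
    intro k
    by_cases hk : k < n
    · have h2 : k < 2 * n - 1 := by omega
      have h3 := hrow ⟨k, h2⟩
      have h4 : coeffs8 n L ⟨k, h2⟩ = (S8.D1 L hn0).coeff k := by
        rw [coeffs8, if_pos (show k < n from hk), S8.det_A8 L hn]
      rwa [h4] at h3
    · refine Finset.sum_eq_zero fun v _ => ?_
      rw [S8.pd_coeff_D1_high L hn0 k (by omega), map_zero, mul_zero]
  have rowPP : ∀ k : ℕ, ∑ v, g v * φ (pderiv v ((S8.PP L).coeff k)) = 0 := by
    intro k
    by_cases hk : k < n - 1
    · have h2 : n + k < 2 * n - 1 := by omega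
      have h3 := hrow ⟨n + k, h2⟩
      have h4 : coeffs8 n L ⟨n + k, h2⟩ = (S8.PP L).coeff k := by
        rw [coeffs8, if_neg (show ¬(n + k < n) by omega), S8.det_sub L hn0]
        congr 1
        show n + k - n = k
        omega
      rwa [h4] at h3
    · refine Finset.sum_eq_zero fun v _ => ?_
      rw [S8.pd_coeff_PP_high L k (by omega), map_zero, mul_zero]
  have key2 : ∀ s : Fin (n - 1), ∑ v, g v * φ (S8.wv L v s) = 0 := by
    have hx : ∀ x : K, ∑ s, (∑ v, g v * φ (S8.wv L v s))
        * (∏ j ∈ univ.erase s, (x + φ (S8.βv L j))) = 0 := by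
      intro x
      have h1 : ∑ v, g v * Polynomial.eval₂ φ x (S8.pdP L v (S8.PP L)) = 0 := by
        have hdeg : ∀ v, (S8.pdP L v (S8.PP L)).natDegree < n :=
          fun v => lt_of_le_of_lt (S8.natdeg_pdP_le L _) (by rw [S8.natdeg_PP]; omega)
        calc ∑ v, g v * Polynomial.eval₂ φ x (S8.pdP L v (S8.PP L))
            = ∑ v, g v * ∑ k ∈ Finset.range n,
                φ ((S8.pdP L v (S8.PP L)).coeff k) * x ^ k := by
              refine Finset.sum_congr rfl fun v _ => ?_
              rw [Polynomial.eval₂_eq_sum_range' φ (hdeg v) x]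
          _ = ∑ k ∈ Finset.range n,
                (∑ v, g v * φ (pderiv v ((S8.PP L).coeff k))) * x ^ k := by
              rw [S8.swap_gsum]
              refine Finset.sum_congr rfl fun k _ => ?_
              congr 1
          _ = 0 := Finset.sum_eq_zero fun k _ => by rw [rowPP k, zero_mul]
      have h2 : ∑ v, g v * Polynomial.eval₂ φ x (S8.pdP L v (S8.PP L))
          = ∑ s, (∑ v, g v * φ (S8.wv L v s))
              * (∏ j ∈ univ.erase s, (x + φ (S8.βv L j))) := by
        rw [← S8.swap_gsum]
        exact Finset.sum_congr rfl fun v _ => by rw [S8.ev_pdP_PP L φ x]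
      rw [← h2]
      exact h1
    intro s
    have hx' := hx (-φ (S8.βv L s))
    rw [Finset.sum_eq_single s ?hothers ?hnomem] at hx'
    case hnomem => exact fun h => absurd (mem_univ s) h
    case hothers =>
      intro t _ hts
      rw [Finset.prod_eq_zero (Finset.mem_erase.2 ⟨Ne.symm hts, mem_univ s⟩)
        (by ring), mul_zero]
    have hprod : (∏ j ∈ univ.erase s, (-φ (S8.βv L s) + φ (S8.βv L j))) ≠ 0 := by
      rw [Finset.prod_ne_zero_iff]
      intro j hj
      have hne := S8.βv_ne L (show j ≠ s from (Finset.mem_erase.1 hj).1)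
      have hsub : φ (S8.βv L j) - φ (S8.βv L s) ≠ 0 := by
        rw [← map_sub]
        exact φne _ (sub_ne_zero.2 hne)
      intro h0
      apply hsub
      rw [← h0]
      ring
    rcases mul_eq_zero.1 hx' with h | h
    · exact h
    · exact absurd h hprod
  have hG1 : ∀ x : K,
      (∑ v, g v * φ (pderiv v (S8.δv L ⟨0, hn0⟩))) * (∏ j, (x + φ (S8.βv L j)))
        - ∑ t, (∑ v, g v * φ (pderiv v (S8.av L t * S8.bv L t)))
            * (∏ j ∈ univ.erase t, (x + φ (S8.βv L j))) = 0 := by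
    intro x
    have h1 : ∑ v, g v * Polynomial.eval₂ φ x (S8.pdP L v (S8.D1 L hn0)) = 0 := by
      have hdeg : ∀ v, (S8.pdP L v (S8.D1 L hn0)).natDegree < n + 1 :=
        fun v => lt_of_le_of_lt (S8.natdeg_pdP_le L _)
          (lt_of_le_of_lt (S8.natdeg_D1_le L hn0) (by omega))
      calc ∑ v, g v * Polynomial.eval₂ φ x (S8.pdP L v (S8.D1 L hn0))
          = ∑ v, g v * ∑ k ∈ Finset.range (n + 1),
              φ ((S8.pdP L v (S8.D1 L hn0)).coeff k) * x ^ k := by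
            refine Finset.sum_congr rfl fun v _ => ?_
            rw [Polynomial.eval₂_eq_sum_range' φ (hdeg v) x]
        _ = ∑ k ∈ Finset.range (n + 1),
              (∑ v, g v * φ (pderiv v ((S8.D1 L hn0).coeff k))) * x ^ k := by
            rw [S8.swap_gsum]
            refine Finset.sum_congr rfl fun k _ => ?_
            congr 1
        _ = 0 := Finset.sum_eq_zero fun k _ => by rw [rowD1 k, zero_mul]
    have h2 : ∑ v, g v * Polynomial.eval₂ φ x (S8.pdP L v (S8.D1 L hn0))
        = (∑ v, g v * φ (pderiv v (S8.δv L ⟨0, hn0⟩))) * (∏ j, (x + φ (S8.βv L j)))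
          + (x + φ (S8.δv L ⟨0, hn0⟩))
              * ∑ s, (∑ v, g v * φ (S8.wv L v s))
                  * (∏ j ∈ univ.erase s, (x + φ (S8.βv L j)))
          - ∑ t, ((∑ v, g v * φ (pderiv v (S8.av L t * S8.bv L t)))
                * (∏ j ∈ univ.erase t, (x + φ (S8.βv L j)))
              + φ (S8.av L t * S8.bv L t)
                * ∑ s ∈ univ.erase t, (∑ v, g v * φ (S8.wv L v s))
                    * (∏ j ∈ (univ.erase t).erase s, (x + φ (S8.βv L j)))) := by
      calc ∑ v, g v * Polynomial.eval₂ φ x (S8.pdP L v (S8.D1 L hn0))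
          = ∑ v, (g v * φ (pderiv v (S8.δv L ⟨0, hn0⟩)) * (∏ j, (x + φ (S8.βv L j)))
              + (x + φ (S8.δv L ⟨0, hn0⟩))
                  * (g v * ∑ s, φ (S8.wv L v s)
                      * (∏ j ∈ univ.erase s, (x + φ (S8.βv L j))))
              - ∑ t, (g v * φ (pderiv v (S8.av L t * S8.bv L t))
                    * (∏ j ∈ univ.erase t, (x + φ (S8.βv L j)))
                  + φ (S8.av L t * S8.bv L t)
                    * (g v * ∑ s ∈ univ.erase t, φ (S8.wv L v s)
                        * (∏ j ∈ (univ.erase t).erase s, (x + φ (S8.βv L j)))))) := by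
            refine Finset.sum_congr rfl fun v _ => ?_
            rw [S8.ev_pdP_D1 L φ hn0 x, mul_sub, mul_add]
            congr 1
            · congr 1
              · ring
              · ring
            · rw [Finset.mul_sum]
              exact Finset.sum_congr rfl fun t _ => by rw [mul_add]; congr 1 <;> ring
        _ = _ := by
            rw [Finset.sum_sub_distrib, Finset.sum_add_distrib, ← Finset.sum_mul,
              ← Finset.mul_sum, S8.swap_gsum, Finset.sum_comm]
            congr 1
            refine Finset.sum_congr rfl fun t _ => ?_
            rw [Finset.sum_add_distrib, ← Finset.sum_mul, ← Finset.mul_sum, S8.swap_gsum]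
    rw [h2] at h1
    rw [Finset.sum_congr rfl (fun s (_ : s ∈ (univ : Finset (Fin (n - 1)))) => by
        rw [key2 s, zero_mul]),
      Finset.sum_const_zero, mul_zero, add_zero] at h1
    rw [Finset.sum_congr rfl (fun t (_ : t ∈ (univ : Finset (Fin (n - 1)))) => by
        rw [Finset.sum_congr rfl (fun s (_ : s ∈ univ.erase t) => by
            rw [key2 s, zero_mul]),
          Finset.sum_const_zero, mul_zero, add_zero])] at h1
    exact h1
  have hu : ∀ t, (∑ v, g v * φ (pderiv v (S8.av L t * S8.bv L t))) = 0 := by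
    intro t
    have h := hG1 (-φ (S8.βv L t))
    rw [Finset.prod_eq_zero (mem_univ t) (by ring), mul_zero] at h
    rw [Finset.sum_eq_single t ?hoth ?hnm] at h
    case hnm => exact fun hh => absurd (mem_univ t) hh
    case hoth =>
      intro s _ hst
      rw [Finset.prod_eq_zero (Finset.mem_erase.2 ⟨Ne.symm hst, mem_univ t⟩)
        (by ring), mul_zero]
    have hprod : (∏ j ∈ univ.erase t, (-φ (S8.βv L t) + φ (S8.βv L j))) ≠ 0 := by
      rw [Finset.prod_ne_zero_iff]
      intro j hj
      have hne := S8.βv_ne L (show j ≠ t from (Finset.mem_erase.1 hj).1)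
      have hsub : φ (S8.βv L j) - φ (S8.βv L t) ≠ 0 := by
        rw [← map_sub]
        exact φne _ (sub_ne_zero.2 hne)
      intro h0
      apply hsub
      rw [← h0]
      ring
    rw [zero_sub, neg_eq_zero] at h
    rcases mul_eq_zero.1 h with h' | h'
    · exact h'
    · exact absurd h' hprod
  have hΓ : (∑ v, g v * φ (pderiv v (S8.δv L ⟨0, hn0⟩))) = 0 := by
    have h := hG1 1
    rw [Finset.sum_congr rfl (fun t (_ : t ∈ (univ : Finset (Fin (n - 1)))) => by
        rw [hu t, zero_mul]),
      Finset.sum_const_zero, sub_zero] at h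
    have hprod : (∏ j, ((1 : K) + φ (S8.βv L j))) ≠ 0 := by
      rw [Finset.prod_ne_zero_iff]
      intro j _
      have heq : (1 : K) + φ (S8.βv L j) = φ (1 + S8.βv L j) := by
        rw [map_add, map_one]
      rw [heq]
      exact φne _ (S8.one_add_βv_ne_zero L j)
    rcases mul_eq_zero.1 h with h' | h'
    · exact h'
    · exact absurd h' hprod
  -- unfolded equations
  have hgb : ∀ s, g (Sum.inl (Sum.inr s))
      + ∑ j : {i : Fin n // i ∈ L},
          (if j.1 = S8.ifn s then g (Sum.inr j) else 0) = 0 := by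
    intro s
    have h := key2 s
    rwa [S8.unfold_γ L φ g s] at h
  have hu' : ∀ t, g (Sum.inl (Sum.inl t)) * φ (S8.bv L t)
      + g (Sum.inl (Sum.inr t)) * φ (S8.av L t) = 0 := by
    intro t
    have h := hu t
    rwa [S8.unfold_u L φ g t] at h
  have hΓ' : ∑ t, g (Sum.inl (Sum.inl t))
      + ∑ j : {i : Fin n // i ∈ L},
          (if j.1 = (⟨0, hn0⟩ : Fin n) then g (Sum.inr j) else 0) = 0 := by
    have h := hΓ
    rwa [S8.unfold_Γ L φ g hn0] at h
  -- endgame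
  have hinr : ∀ j : {i : Fin n // i ∈ L}, g (Sum.inr j) = 0 := by
    intro j
    by_cases hq : (j.1 : Fin n) = ⟨0, hn0⟩
    · have hb : ∀ s, g (Sum.inl (Sum.inr s)) = 0 := by
        intro s
        have h := hgb s
        rwa [Finset.sum_eq_zero (fun j' _ => by
            rw [Subsingleton.elim j' j, if_neg (fun hcontra =>
              S8.ifn_ne_zero s (by rw [← show (j.1 : Fin n).1 = 0 from congrArg Fin.val hq,
                hcontra]))]),
          add_zero] at h
      have ha : ∀ t, g (Sum.inl (Sum.inl t)) = 0 := by
        intro t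
        have h := hu' t
        rw [hb t, zero_mul, add_zero] at h
        exact (mul_eq_zero.1 h).resolve_right (φne _ (S8.bv_ne_zero L t))
      have h := hΓ'
      rw [Finset.sum_eq_zero (fun t _ => ha t), zero_add,
        Finset.sum_eq_single j (fun j' _ hne => absurd (Subsingleton.elim j' j) hne)
          (fun hnm => absurd (mem_univ j) hnm), if_pos hq] at h
      exact h
    · have hvne : (j.1 : Fin n).1 ≠ 0 := fun h0 => hq (Fin.ext h0)
      have hlt : (j.1 : Fin n).1 - 1 < n - 1 := by
        have := (j.1 : Fin n).isLt
        omega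
      set t₀ : Fin (n - 1) := ⟨(j.1 : Fin n).1 - 1, hlt⟩ with ht₀
      have hifn : S8.ifn t₀ = j.1 := by
        apply Fin.ext
        simp only [S8.ifn, ht₀]
        omega
      have hb : ∀ s, s ≠ t₀ → g (Sum.inl (Sum.inr s)) = 0 := by
        intro s hs
        have h := hgb s
        rwa [Finset.sum_eq_zero (fun j' _ => by
            rw [Subsingleton.elim j' j, if_neg (fun hcontra => hs (S8.ifn_inj (by
              rw [hifn, ← hcontra])))]),
          add_zero] at h
      have ha : ∀ s, s ≠ t₀ → g (Sum.inl (Sum.inl s)) = 0 := by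
        intro s hs
        have h := hu' s
        rw [hb s hs, zero_mul, add_zero] at h
        exact (mul_eq_zero.1 h).resolve_right (φne _ (S8.bv_ne_zero L s))
      have ha0 : g (Sum.inl (Sum.inl t₀)) = 0 := by
        have h := hΓ'
        rw [Finset.sum_eq_zero (fun (j' : {i : Fin n // i ∈ L}) (_ : j' ∈ univ) => by
            rw [Subsingleton.elim j' j, if_neg hq]),
          add_zero,
          Finset.sum_eq_single t₀ (fun s _ hne => ha s hne)
            (fun hnm => absurd (mem_univ t₀) hnm)] at h
        exact h
      have hbt0 : g (Sum.inl (Sum.inr t₀)) = 0 := by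
        have h := hu' t₀
        rw [ha0, zero_mul, zero_add] at h
        exact (mul_eq_zero.1 h).resolve_right (φne _ (S8.av_ne_zero L t₀))
      have h := hgb t₀
      rwa [hbt0, zero_add,
        Finset.sum_eq_single j (fun j' _ hne => absurd (Subsingleton.elim j' j) hne)
          (fun hnm => absurd (mem_univ j) hnm), if_pos hifn.symm] at h
  have hb : ∀ s, g (Sum.inl (Sum.inr s)) = 0 := by
    intro s
    have h := hgb s
    rwa [Finset.sum_eq_zero (fun j' _ => by rw [hinr j']; exact ite_self 0), add_zero] at h
  have ha : ∀ t, g (Sum.inl (Sum.inl t)) = 0 := by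
    intro t
    have h := hu' t
    rw [hb t, zero_mul, add_zero] at h
    exact (mul_eq_zero.1 h).resolve_right (φne _ (S8.bv_ne_zero L t))
  intro v
  rcases v with (t | t) | j
  · exact ha t
  · exact hb t
  · exact hinr j

end S8

/-- For the mammillary model with input and output in compartment `1` and at most one leak,
the Jacobian of the coefficient map with respect to all `2(n-1) + |L|` variables, viewed
over the field of rational functions, has full rank `2(n-1) + |L|`. -/
theorem stmt8 (n : ℕ) (hn : 2 ≤ n) (L : Finset (Fin n)) (hL : L.card ≤ 1) :
    (Matrix.of fun (m : Fin (2 * n - 1))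
        (v : (Fin (n - 1) ⊕ Fin (n - 1)) ⊕ {i : Fin n // i ∈ L}) =>
        algebraMap (MvPolynomial ((Fin (n - 1) ⊕ Fin (n - 1)) ⊕ {i : Fin n // i ∈ L}) ℝ)
          (FractionRing
            (MvPolynomial ((Fin (n - 1) ⊕ Fin (n - 1)) ⊕ {i : Fin n // i ∈ L}) ℝ))
          (pderiv v (coeffs8 n L m))).rank = 2 * (n - 1) + L.card := by

  classical
  have hlin : LinearIndependent (FractionRing (S8.Rp n L))
      (Matrix.col (Matrix.of fun (m : Fin (2 * n - 1))
        (v : (Fin (n - 1) ⊕ Fin (n - 1)) ⊕ {i : Fin n // i ∈ L}) =>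
        algebraMap (MvPolynomial ((Fin (n - 1) ⊕ Fin (n - 1)) ⊕ {i : Fin n // i ∈ L}) ℝ)
          (FractionRing
            (MvPolynomial ((Fin (n - 1) ⊕ Fin (n - 1)) ⊕ {i : Fin n // i ∈ L}) ℝ))
          (pderiv v (coeffs8 n L m)))) := by
    rw [Fintype.linearIndependent_iff]
    intro g hg
    refine S8.gvanish hn L hL (algebraMap (S8.Rp n L) (FractionRing (S8.Rp n L)))
      (IsFractionRing.injective _ _) g (fun mm => ?_)
    have h := congrFun hg mm
    simpa [Finset.sum_apply, Matrix.col, Matrix.transpose_apply, Matrix.of_apply] using h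
  rw [Matrix.rank_eq_finrank_span_cols, finrank_span_eq_card hlin,
    Fintype.card_sum, Fintype.card_sum, Fintype.card_fin, Fintype.card_coe]
  omega
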